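/- Let Q be a unital quantale with unit e and let γ ∈ Q be such that {m ∈ Q | m ≤ e} \ {e} = {m ∈ Q | m ≤ γ} and {m ∈ Q | e ≤ m} \ {e} = {⊤}. Then: (1) γ * α ⊔ α * γ ≤ α for every α ∈ Q; and (2) for every α ∈ Q and every β ∈ Q with β ≠ e and β ≰ γ, one has ⊤ * α = (β * α) ⊔ α and α * ⊤ = (α * β) ⊔ α. -/
import Mathlib


/-- In a unital quantale whose unit `e` is isolated with `e⁻ = γ` and
`e⁺ = ⊤`, one has (1) `γ * α ⊔ α * γ ≤ α` for every `α`, and (2) for every `α` and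
every `β ≠ e` with `β ≰ γ`, `⊤ * α = (β * α) ⊔ α` and `α * ⊤ = (α * β) ⊔ α`. -/
theorem stmt_8 {Q : Type*} [CompleteLattice Q] (mul : Q → Q → Q)
    (hassoc : ∀ a b c : Q, mul (mul a b) c = mul a (mul b c))
    (hsSup_left : ∀ (A : Set Q) (b : Q), mul (sSup A) b = ⨆ a ∈ A, mul a b)
    (hsSup_right : ∀ (A : Set Q) (b : Q), mul b (sSup A) = ⨆ a ∈ A, mul b a)
    (e : Q) (he_left : ∀ a : Q, mul e a = a) (he_right : ∀ a : Q, mul a e = a)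
    (γ : Q)
    (hdown : {m : Q | m ≤ e} \ {e} = {m : Q | m ≤ γ})
    (hup : {m : Q | e ≤ m} \ {e} = {(⊤ : Q)}) :
    (∀ α : Q, mul γ α ⊔ mul α γ ≤ α) ∧
    (∀ α β : Q, β ≠ e → ¬ β ≤ γ →
      mul ⊤ α = mul β α ⊔ α ∧ mul α ⊤ = mul α β ⊔ α) := by

  -- pair laws
  have hpair_left : ∀ a b c : Q, mul (a ⊔ b) c = mul a c ⊔ mul b c := by
    intro a b c
    have := hsSup_left {a, b} c
    rw [sSup_pair, iSup_pair] at this; exact this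
  have hpair_right : ∀ a b c : Q, mul c (a ⊔ b) = mul c a ⊔ mul c b := by
    intro a b c
    have := hsSup_right {a, b} c
    rw [sSup_pair, iSup_pair] at this; exact this
  have hmono_left : ∀ a b c : Q, a ≤ b → mul a c ≤ mul b c := by
    intro a b c hab
    have : mul (a ⊔ b) c = mul a c ⊔ mul b c := hpair_left a b c
    rw [sup_eq_right.mpr hab] at this
    rw [this]; exact le_sup_left
  have hmono_right : ∀ a b c : Q, a ≤ b → mul c a ≤ mul c b := by
    intro a b c hab
    have : mul c (a ⊔ b) = mul c a ⊔ mul c b := hpair_right a b c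
    rw [sup_eq_right.mpr hab] at this
    rw [this]; exact le_sup_left
  have hγe : γ ≤ e := by
    have : γ ∈ {m : Q | m ≤ γ} := le_refl γ
    rw [← hdown] at this
    exact this.1
  constructor
  · intro α
    apply sup_le
    · calc mul γ α ≤ mul e α := hmono_left _ _ _ hγe
        _ = α := he_left α
    · calc mul α γ ≤ mul α e := hmono_right _ _ _ hγe
        _ = α := he_right α
  · intro α β hβe hβγ
    have hβtop : β ⊔ e = ⊤ := by
      have h1 : β ⊔ e ∈ {m : Q | e ≤ m} \ {e} := by
        constructor
        · exact le_sup_right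
        · intro h
          simp only [Set.mem_singleton_iff] at h
          have hβle : β ≤ e := le_sup_left.trans h.le
          have : β ∈ {m : Q | m ≤ e} \ {e} := ⟨hβle, hβe⟩
          rw [hdown] at this
          exact hβγ this
      rw [hup] at h1
      exact h1
    constructor
    · rw [← hβtop, hpair_left, he_left]
    · rw [← hβtop, hpair_right, he_right]
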